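/- Let A be an admissible set of addition chains and n a positive integer. Then (1) δ^A_st(n) = min over k ≥ 0 of δ^A(2^k n), and (2) δ^A_st(n) is the smallest element α of 𝒟^A satisfying α ≡ δ^A(n) (mod 1), i.e., with α − δ^A(n) ∈ ℤ. -/
import Mathlib


/-- `c` is an addition chain: a nonempty list of positive integers starting at `1`
such that every later entry is the sum of two (not necessarily distinct) earlier entries. -/
def IsAdditionChain (c : List ℕ) : Prop :=
  c.getD 0 0 = 1 ∧
    ∀ k, 0 < k → k < c.length →
      ∃ i j, i < k ∧ j < k ∧ c.getD k 0 = c.getD i 0 + c.getD j 0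

/-- `c` is an addition chain whose last entry is `n`; its length is `c.length - 1`. -/
def IsAdditionChainFor (c : List ℕ) (n : ℕ) : Prop :=
  IsAdditionChain c ∧ c.getD (c.length - 1) 0 = n

/-- ν₂(n): the number of 1's in the binary expansion of `n`. -/
def binaryWeight (n : ℕ) : ℕ := (Nat.digits 2 n).sum

/-- `ℓ^A(n)`: the least length (number of steps, i.e. one less than the number of
entries) of an addition chain for `n` belonging to the set `A` of addition chains. -/
noncomputable def chainLength (A : Set (List ℕ)) (n : ℕ) : ℕ :=
  sInf {r | ∃ c ∈ A, IsAdditionChainFor c n ∧ c.length = r + 1}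

/-- A set `A` of addition chains is admissible if (i) every positive `n` has a chain
in `A` of length at most `⌊log₂ n⌋ + ν₂(n) - 1` (i.e. with at most
`⌊log₂ n⌋ + ν₂(n)` entries) and (ii) `ℓ^A(2n) ≤ ℓ^A(n) + 1` for all positive `n`. -/
def Admissible (A : Set (List ℕ)) : Prop :=
  (∀ n : ℕ, 0 < n → ∃ c ∈ A, IsAdditionChainFor c n ∧
      c.length ≤ Nat.log 2 n + binaryWeight n) ∧
  ∀ n : ℕ, 0 < n → chainLength A (2 * n) ≤ chainLength A n + 1

/-- The A-defect `δ^A(n) = ℓ^A(n) - log₂ n`. -/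
noncomputable def Adefect (A : Set (List ℕ)) (n : ℕ) : ℝ :=
  (chainLength A n : ℝ) - Real.logb 2 n

/-- `m` is A-stable if `ℓ^A(2^k m) = ℓ^A(m) + k` for all `k ≥ 0`. -/
def AStable (A : Set (List ℕ)) (m : ℕ) : Prop :=
  ∀ k : ℕ, chainLength A (2 ^ k * m) = chainLength A m + k

/-- `𝒟^A`: the set of all A-defect values. -/
def defectSet (A : Set (List ℕ)) : Set ℝ :=
  {d | ∃ n : ℕ, 0 < n ∧ d = Adefect A n}

/-- `𝒟^A_st`: the set of all A-stable defects. -/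
def stableDefectSet (A : Set (List ℕ)) : Set ℝ :=
  {d | ∃ n : ℕ, 0 < n ∧ AStable A n ∧ d = Adefect A n}

open scoped Classical in
/-- The order type of a well-ordered subset `S` of a linear order
(junk value `0` if `S` is not well-ordered, i.e. not `Set.IsWF`). -/
noncomputable def setOrderType {X : Type*} [LinearOrder X] (S : Set X) : Ordinal :=
  if h : S.IsWF then
    letI : WellFoundedLT S := ⟨h⟩
    Ordinal.type ((· < ·) : S → S → Prop)
  else 0

lemma logb_two_mul (m : ℕ) (hm : 0 < m) :
    Real.logb 2 ((2 * m : ℕ) : ℝ) = 1 + Real.logb 2 m := by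
  push_cast
  rw [Real.logb_mul (by norm_num) (by positivity), show Real.logb 2 2 = 1 by simp]

lemma logb_pow_mul (k m : ℕ) (hm : 0 < m) :
    Real.logb 2 ((2 ^ k * m : ℕ) : ℝ) = k + Real.logb 2 m := by
  push_cast
  rw [Real.logb_mul (by positivity) (by positivity), Real.logb_pow,
    show Real.logb 2 2 = 1 by simp]
  ring

lemma defect_double_le (A : Set (List ℕ)) (hA : Admissible A) (m : ℕ) (hm : 0 < m) :
    Adefect A (2 * m) ≤ Adefect A m := by
  have h := hA.2 m hm
  unfold Adefect
  rw [logb_two_mul m hm]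
  have : (chainLength A (2 * m) : ℝ) ≤ (chainLength A m : ℝ) + 1 := by exact_mod_cast h
  linarith

lemma defect_pow_le (A : Set (List ℕ)) (hA : Admissible A) (m : ℕ) (hm : 0 < m)
    {a b : ℕ} (h : a ≤ b) : Adefect A (2 ^ b * m) ≤ Adefect A (2 ^ a * m) := by
  induction b with
  | zero => simp_all
  | succ b ih =>
    rcases Nat.lt_or_ge a (b+1) with h' | h'
    · have : (2 : ℕ) ^ (b+1) * m = 2 * (2 ^ b * m) := by ring
      rw [this]
      exact (defect_double_le A hA _ (by positivity)).trans (ih (Nat.lt_succ_iff.mp h'))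
    · have : a = b + 1 := le_antisymm h h'
      subst this; exact le_refl _

/-- The stable defect `δ^A_st(n)` (here `δ^A(2^K n)` for any `K` with `2^K n`
`A`-stable) is (1) the minimum over `k ≥ 0` of `δ^A(2^k n)`, and (2) the smallest
`α ∈ 𝒟^A` with `α ≡ δ^A(n) (mod 1)`, i.e. with `α - δ^A(n) ∈ ℤ`. -/
theorem stableDefect_isLeast
    (A : Set (List ℕ)) (hA : Admissible A) (n : ℕ) (hn : 0 < n)
    (K : ℕ) (hK : AStable A (2 ^ K * n)) :
    IsLeast {d : ℝ | ∃ k : ℕ, d = Adefect A (2 ^ k * n)} (Adefect A (2 ^ K * n)) ∧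
    IsLeast {α | α ∈ defectSet A ∧ ∃ z : ℤ, α - Adefect A n = (z : ℝ)}
      (Adefect A (2 ^ K * n)) := by
  -- lower bound over all powers
  have hlb : ∀ k : ℕ, Adefect A (2 ^ K * n) ≤ Adefect A (2 ^ k * n) := by
    intro k
    rcases le_or_gt k K with h | h
    · exact defect_pow_le A hA n hn h
    · -- k ≥ K : equality via stability
      have hkK : K ≤ k := h.le
      have harg : (2 : ℕ) ^ (k - K) * (2 ^ K * n) = 2 ^ k * n := by
        rw [← mul_assoc, ← pow_add, Nat.sub_add_cancel hkK]
      have hlen := hK (k - K)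
      rw [harg] at hlen
      have hl1 := logb_pow_mul k n hn
      have hl2 := logb_pow_mul K n (by positivity : (0:ℕ) < n)
      unfold Adefect
      rw [hlen, hl1, hl2]
      push_cast [Nat.cast_sub hkK]
      linarith
  have hmem1 : Adefect A (2 ^ K * n) ∈ {d : ℝ | ∃ k : ℕ, d = Adefect A (2 ^ k * n)} := ⟨K, rfl⟩
  refine ⟨⟨hmem1, ?_⟩, ⟨⟨⟨2 ^ K * n, by positivity, rfl⟩, ?_⟩, ?_⟩⟩
  · rintro d ⟨k, rfl⟩; exact hlb k
  · -- the difference with δ(n) is an integer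
    refine ⟨(chainLength A (2 ^ K * n) : ℤ) - chainLength A n - K, ?_⟩
    unfold Adefect
    rw [logb_pow_mul K n hn]
    push_cast
    ring
  · rintro α ⟨⟨m, hm, rfl⟩, z, hz⟩
    -- logb 2 m - logb 2 n is the integer t
    set t : ℤ := (chainLength A m : ℤ) - chainLength A n - z with ht
    have hlog : Real.logb 2 (m : ℝ) = (t : ℝ) + Real.logb 2 (n : ℝ) := by
      unfold Adefect at hz
      push_cast [ht]
      linarith
    have hmR : (m : ℝ) = (n : ℝ) * (2 : ℝ) ^ t := by
      have h1 : (m : ℝ) = (2 : ℝ) ^ (Real.logb 2 (m : ℝ)) :=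
        (Real.rpow_logb (by norm_num) (by norm_num) (by exact_mod_cast hm)).symm
      rw [hlog, Real.rpow_add (by norm_num), Real.rpow_intCast,
        Real.rpow_logb (by norm_num) (by norm_num) (by exact_mod_cast hn)] at h1
      rw [h1]; ring
    rcases le_or_gt 0 t with h0 | h0
    · -- m = 2^t.toNat * n
      have hmn : m = 2 ^ t.toNat * n := by
        have h2 : (m : ℝ) = (n : ℝ) * (2 : ℝ) ^ (t.toNat) := by
          rw [hmR, ← zpow_natCast (2:ℝ) t.toNat, Int.toNat_of_nonneg h0]
        have : (m : ℝ) = ((2 ^ t.toNat * n : ℕ) : ℝ) := by push_cast; rw [h2]; ring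
        exact_mod_cast this
      rw [hmn]
      exact hlb t.toNat
    · -- n = 2^(-t).toNat * m
      have hnm : n = 2 ^ (-t).toNat * m := by
        have h2 : (n : ℝ) = (m : ℝ) * (2 : ℝ) ^ ((-t).toNat) := by
          have hne : ((-t).toNat : ℤ) = -t := Int.toNat_of_nonneg (by omega)
          rw [hmR, ← zpow_natCast (2:ℝ) ((-t).toNat), hne, mul_assoc,
            ← zpow_add₀ (by norm_num : (2:ℝ) ≠ 0)]
          simp
        have : (n : ℝ) = ((2 ^ (-t).toNat * m : ℕ) : ℝ) := by push_cast; rw [h2]; ring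
        exact_mod_cast this
      have h1 : Adefect A (2 ^ K * n) ≤ Adefect A n := hlb 0 |>.trans_eq (by norm_num)
      have h2 : Adefect A n ≤ Adefect A m := by
        calc Adefect A n = Adefect A (2 ^ (-t).toNat * m) := by rw [hnm]
        _ ≤ Adefect A (2 ^ 0 * m) := defect_pow_le A hA m hm (Nat.zero_le _)
        _ = Adefect A m := by norm_num
      exact h1.trans h2
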